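/- For every 132-avoiding permutation p of length n and indices i < j, the pair p(i)p(j) is a 12-pattern (i.e. p(i) < p(j)) if and only if the vertex of the binary plane tree T(p) corresponding to position i is a left descendant of the vertex corresponding to position j. -/

import Mathlib

/-- `f` picks out an occurrence of the pattern `q` in the permutation `p`. -/
def IsOcc {n k : ℕ} (q : Fin k → ℕ) (p : Equiv.Perm (Fin n)) (f : Fin k → Fin n) : Prop :=
  StrictMono f ∧ ∀ a b : Fin k, q a < q b ↔ (p (f a) : ℕ) < (p (f b) : ℕ)

def ContainsPat {n k : ℕ} (q : Fin k → ℕ) (p : Equiv.Perm (Fin n)) : Prop :=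
  ∃ f, IsOcc q p f

/-- `p` avoids the pattern 132. -/
def Avoids132 {n : ℕ} (p : Equiv.Perm (Fin n)) : Prop :=
  ¬ ContainsPat (![1, 3, 2] : Fin 3 → ℕ) p

/-- The number of occurrences of the pattern `q` in the permutation `p`. -/
noncomputable def occCnt {n k : ℕ} (q : Fin k → ℕ) (p : Equiv.Perm (Fin n)) : ℕ :=
  Nat.card {f : Fin k → Fin n // IsOcc q p f}

open scoped Classical in
/-- The total number of occurrences of the pattern `q` in all
132-avoiding permutations of length `n`. -/
noncomputable def S132 (n : ℕ) {k : ℕ} (q : Fin k → ℕ) : ℕ :=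
  ∑ p ∈ Finset.univ.filter (fun p : Equiv.Perm (Fin n) => Avoids132 p), occCnt q p

/-- Binary plane trees whose vertices carry a label (the position in the
permutation). -/
inductive PTree : Type
  | nil : PTree
  | node (l : PTree) (lab : ℕ) (r : PTree) : PTree

/-- `lab` is a label occurring in the tree. -/
def PTree.Mem : PTree → ℕ → Prop
  | .nil, _ => False
  | .node l x r, i => x = i ∨ l.Mem i ∨ r.Mem i

/-- The vertex labelled `i` is a left descendant of the vertex labelled `j`,
i.e. lies in the left subtree of the vertex labelled `j`. -/
def PTree.LeftDesc : PTree → ℕ → ℕ → Prop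
  | .nil, _, _ => False
  | .node l x r, i, j => (x = j ∧ l.Mem i) ∨ l.LeftDesc i j ∨ r.LeftDesc i j

/-- Build the labelled binary plane tree of a list of (position, value) pairs:
the root is the pair with the maximum value, and the left/right subtrees are
built recursively from the prefix/suffix.  The first argument is fuel. -/
def ptreeOfAux : ℕ → List (ℕ × ℕ) → PTree
  | 0, _ => .nil
  | _ + 1, [] => .nil
  | fuel + 1, x :: xs =>
      let l := x :: xs
      let i := l.findIdx (fun a => a.2 = l.foldr (fun a b => max a.2 b) 0)
      .node (ptreeOfAux fuel (l.take i)) ((l.getD i (0, 0)).1)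
        (ptreeOfAux fuel (l.drop (i + 1)))

/-- The binary plane tree `T(p)` of a permutation `p`, with each vertex labelled
by the corresponding position (0-indexed). -/
def permToPTree {n : ℕ} (p : Equiv.Perm (Fin n)) : PTree :=
  ptreeOfAux n (List.ofFn fun i => ((i : ℕ), (p i : ℕ)))

namespace StmtHelper

abbrev fmax (l : List (ℕ × ℕ)) : ℕ := l.foldr (fun a b => max a.2 b) 0

lemma le_fmax {l : List (ℕ × ℕ)} : ∀ a ∈ l, a.2 ≤ fmax l := by
  induction l with
  | nil => simp
  | cons x xs ih =>
    intro a ha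
    rcases List.mem_cons.mp ha with rfl | ha
    · exact le_max_left _ _
    · exact le_trans (ih a ha) (le_max_right _ _)

lemma exists_fmax {l : List (ℕ × ℕ)} (h : l ≠ []) : ∃ a ∈ l, a.2 = fmax l := by
  induction l with
  | nil => simp at h
  | cons x xs ih =>
    rcases eq_or_ne xs [] with rfl | hxs
    · exact ⟨x, List.mem_cons_self, by simp [fmax]⟩
    · rcases le_total (fmax xs) x.2 with h1 | h1
      · exact ⟨x, List.mem_cons_self, (max_eq_left h1).symm⟩
      · obtain ⟨a, ha, he⟩ := ih hxs
        exact ⟨a, List.mem_cons_of_mem _ ha,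
          he.trans (max_eq_right h1).symm⟩

lemma leftdesc_mem_left : ∀ (t : PTree) {i j}, t.LeftDesc i j → t.Mem i := by
  intro t
  induction t with
  | nil => intro i j h; exact h.elim
  | node l x r ihl ihr =>
    intro i j h
    rcases h with ⟨_, hm⟩ | h | h
    · exact Or.inr (Or.inl hm)
    · exact Or.inr (Or.inl (ihl h))
    · exact Or.inr (Or.inr (ihr h))

lemma leftdesc_mem_right : ∀ (t : PTree) {i j}, t.LeftDesc i j → t.Mem j := by
  intro t
  induction t with
  | nil => intro i j h; exact h.elim
  | node l x r ihl ihr =>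
    intro i j h
    rcases h with ⟨hx, _⟩ | h | h
    · exact Or.inl hx
    · exact Or.inr (Or.inl (ihl h))
    · exact Or.inr (Or.inr (ihr h))

lemma mem_ptree : ∀ (fuel : ℕ) (l : List (ℕ × ℕ)), l.length ≤ fuel → ∀ i,
    ((ptreeOfAux fuel l).Mem i ↔ i ∈ l.map Prod.fst) := by
  intro fuel
  induction fuel with
  | zero =>
    intro l hl i
    rw [Nat.le_zero, List.length_eq_zero_iff] at hl
    subst hl
    simp [ptreeOfAux, PTree.Mem]
  | succ fuel ih =>
    intro l hl i
    match l with
    | [] => simp [ptreeOfAux, PTree.Mem]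
    | x :: xs =>
      set L := x :: xs with hL
      have hne : L ≠ [] := by simp [hL]
      obtain ⟨r0, hr0m, hr0⟩ := exists_fmax hne
      set idx := L.findIdx (fun a => a.2 = fmax L) with hidx
      have hlt : idx < L.length :=
        List.findIdx_lt_length_of_exists ⟨r0, hr0m, by simpa using hr0⟩
      have hsplit : L = L.take idx ++ L[idx] :: L.drop (idx + 1) := by
        rw [List.getElem_cons_drop, List.take_append_drop]
      have htree : ptreeOfAux (fuel + 1) L =
          .node (ptreeOfAux fuel (L.take idx)) ((L.getD idx (0, 0)).1)
            (ptreeOfAux fuel (L.drop (idx + 1))) := rfl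
      have hgetD : L.getD idx (0, 0) = L[idx] := List.getD_eq_getElem L _ hlt
      have hlen : L.length ≤ fuel + 1 := hl
      have hlt1 : (L.take idx).length ≤ fuel := by
        rw [List.length_take]; omega
      have hlt2 : (L.drop (idx + 1)).length ≤ fuel := by
        rw [List.length_drop]; omega
      rw [htree, hgetD]
      show (L[idx].1 = i ∨ _ ∨ _) ↔ _
      rw [ih _ hlt1, ih _ hlt2]
      conv_rhs => rw [hsplit]
      simp only [List.map_append, List.map_cons, List.mem_append, List.mem_cons]
      constructor
      · rintro (h | h | h)
        · exact Or.inr (Or.inl h.symm)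
        · exact Or.inl h
        · exact Or.inr (Or.inr h)
      · rintro (h | h | h)
        · exact Or.inr (Or.inl h)
        · exact Or.inl h.symm
        · exact Or.inr (Or.inr h)

lemma main_lemma : ∀ (fuel : ℕ) (l : List (ℕ × ℕ)),
    l.length ≤ fuel →
    l.Pairwise (fun a b => a.1 < b.1 ∧ a.2 ≠ b.2) →
    (∀ a ∈ l, ∀ b ∈ l, ∀ c ∈ l,
      a.1 < b.1 → b.1 < c.1 → a.2 < c.2 → c.2 < b.2 → False) →
    ∀ i vi j vj, (i, vi) ∈ l → (j, vj) ∈ l → i < j →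
    (vi < vj ↔ (ptreeOfAux fuel l).LeftDesc i j) := by
  intro fuel
  induction fuel with
  | zero =>
    intro l hl _ _ i vi j vj hi _ _
    rw [Nat.le_zero, List.length_eq_zero_iff] at hl
    subst hl; exact absurd hi (by simp)
  | succ fuel ih =>
    intro l hl hpw h132 i vi j vj hi hj hij
    match l with
    | [] => exact absurd hi (by simp)
    | x :: xs =>
      set L := x :: xs with hL
      have hne : L ≠ [] := by simp [hL]
      obtain ⟨r0, hr0m, hr0⟩ := exists_fmax hne
      set idx := L.findIdx (fun a => a.2 = fmax L) with hidx
      have hlt : idx < L.length :=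
        List.findIdx_lt_length_of_exists ⟨r0, hr0m, by simpa using hr0⟩
      set r := L[idx] with hr
      have hrM : r.2 = fmax L := by
        have := List.findIdx_getElem (w := hlt) (p := fun a : ℕ × ℕ => decide (a.2 = fmax L))
        simpa [← hidx, ← hr] using this
      have hsplit : L = L.take idx ++ r :: L.drop (idx + 1) := by
        rw [hr, List.getElem_cons_drop, List.take_append_drop]
      have htree : ptreeOfAux (fuel + 1) L =
          .node (ptreeOfAux fuel (L.take idx)) ((L.getD idx (0, 0)).1)
            (ptreeOfAux fuel (L.drop (idx + 1))) := rfl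
      have hgetD : L.getD idx (0, 0) = r := List.getD_eq_getElem L _ hlt
      have hlen1 : (L.take idx).length ≤ fuel := by
        rw [List.length_take]; have := hl; omega
      have hlen2 : (L.drop (idx + 1)).length ≤ fuel := by
        rw [List.length_drop]; have := hl; omega
      -- pairwise facts
      have hpw' := hpw
      rw [hsplit, List.pairwise_append] at hpw'
      obtain ⟨hpwT, hpwC, hcross⟩ := hpw'
      rw [List.pairwise_cons] at hpwC
      obtain ⟨hrD, hpwD⟩ := hpwC
      have htake_lt : ∀ a ∈ L.take idx, a.1 < r.1 ∧ a.2 ≠ r.2 := fun a ha =>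
        hcross a ha r (List.mem_cons_self)
      have hdrop_gt : ∀ b ∈ L.drop (idx + 1), r.1 < b.1 ∧ r.2 ≠ b.2 := hrD
      have hsubT : ∀ a ∈ L.take idx, a ∈ L := fun a ha =>
        (List.take_sublist _ _).mem ha
      have hsubD : ∀ a ∈ L.drop (idx + 1), a ∈ L := fun a ha =>
        (List.drop_sublist _ _).mem ha
      -- membership case split
      have hcases : ∀ {k vk}, (k, vk) ∈ L →
          (k, vk) ∈ L.take idx ∨ (k, vk) = r ∨ (k, vk) ∈ L.drop (idx + 1) := by
        intro k vk hk
        rw [hsplit] at hk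
        simpa using hk
      -- memberships in subtrees
      have hmemT : ∀ k, (ptreeOfAux fuel (L.take idx)).Mem k →
          ∃ a ∈ L.take idx, a.1 = k := by
        intro k hk
        rw [mem_ptree fuel _ hlen1] at hk
        obtain ⟨a, ha, hak⟩ := List.mem_map.mp hk
        exact ⟨a, ha, hak⟩
      have hmemD : ∀ k, (ptreeOfAux fuel (L.drop (idx + 1))).Mem k →
          ∃ a ∈ L.drop (idx + 1), a.1 = k := by
        intro k hk
        rw [mem_ptree fuel _ hlen2] at hk
        obtain ⟨a, ha, hak⟩ := List.mem_map.mp hk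
        exact ⟨a, ha, hak⟩
      rw [htree, hgetD]
      show vi < vj ↔
        (r.1 = j ∧ (ptreeOfAux fuel (L.take idx)).Mem i) ∨
        (ptreeOfAux fuel (L.take idx)).LeftDesc i j ∨
        (ptreeOfAux fuel (L.drop (idx + 1))).LeftDesc i j
      have h132T : ∀ a ∈ L.take idx, ∀ b ∈ L.take idx, ∀ c ∈ L.take idx,
          a.1 < b.1 → b.1 < c.1 → a.2 < c.2 → c.2 < b.2 → False := fun a ha b hb c hc =>
        h132 a (hsubT a ha) b (hsubT b hb) c (hsubT c hc)
      have h132D : ∀ a ∈ L.drop (idx+1), ∀ b ∈ L.drop (idx+1), ∀ c ∈ L.drop (idx+1),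
          a.1 < b.1 → b.1 < c.1 → a.2 < c.2 → c.2 < b.2 → False := fun a ha b hb c hc =>
        h132 a (hsubD a ha) b (hsubD b hb) c (hsubD c hc)
      rcases hcases hi with hiT | hiR | hiD
      · rcases hcases hj with hjT | hjR | hjD
        · -- both in take: recurse left
          have hIH := ih _ hlen1 hpwT h132T i vi j vj hiT hjT hij
          rw [hIH]
          constructor
          · exact fun h => Or.inr (Or.inl h)
          · rintro (⟨hrj, _⟩ | h | h)
            · exact absurd hrj (by have := (htake_lt _ hjT).1; omega)
            · exact h
            · exfalso
              obtain ⟨a, ha, hak⟩ := hmemD i (leftdesc_mem_left _ h)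
              have h1 := (hdrop_gt _ ha).1
              have h2 := (htake_lt _ hiT).1
              omega
        · -- j is the root
          have hjr : j = r.1 ∧ vj = r.2 := by
            constructor <;> (rw [← hjR])
          have hvi_lt : vi < vj := by
            have h1 : vi ≤ fmax L := le_fmax _ hi
            have h2 : vi ≠ r.2 := (htake_lt _ hiT).2
            have := hjr.2
            omega
          have hmem : (ptreeOfAux fuel (L.take idx)).Mem i := by
            rw [mem_ptree fuel _ hlen1]
            exact List.mem_map.mpr ⟨(i, vi), hiT, rfl⟩
          simp only [hvi_lt, true_iff]
          exact Or.inl ⟨hjr.1.symm, hmem⟩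
        · -- i in take, j in drop: both sides false
          have hir : i < r.1 := (htake_lt _ hiT).1
          have hjr : r.1 < j := (hdrop_gt _ hjD).1
          have hvj_lt : vj < r.2 := by
            have h1 : vj ≤ fmax L := le_fmax _ hj
            have h2 : r.2 ≠ vj := (hdrop_gt _ hjD).2
            omega
          constructor
          · intro hvv
            exact absurd (h132 (i, vi) (hsubT _ hiT) r (hr ▸ List.getElem_mem hlt)
              (j, vj) (hsubD _ hjD) hir hjr hvv hvj_lt) (by simp)
          · rintro (⟨hrj, _⟩ | h | h)
            · omega
            · obtain ⟨b, hb, hbk⟩ := hmemT j (leftdesc_mem_right _ h)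
              have := (htake_lt _ hb).1; omega
            · obtain ⟨a, ha, hak⟩ := hmemD i (leftdesc_mem_left _ h)
              have := (hdrop_gt _ ha).1; omega
      · -- i is the root
        have hir : i = r.1 ∧ vi = r.2 := by constructor <;> rw [← hiR]
        rcases hcases hj with hjT | hjR | hjD
        · have := (htake_lt _ hjT).1; omega
        · have : j = r.1 := by rw [← hjR]
          omega
        · have hjr : r.1 < j := (hdrop_gt _ hjD).1
          have hvj_lt : vj < vi := by
            have h1 : vj ≤ fmax L := le_fmax _ hj
            have h2 : r.2 ≠ vj := (hdrop_gt _ hjD).2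
            omega
          constructor
          · omega
          · rintro (⟨hrj, _⟩ | h | h)
            · omega
            · obtain ⟨b, hb, hbk⟩ := hmemT j (leftdesc_mem_right _ h)
              have := (htake_lt _ hb).1; omega
            · obtain ⟨a, ha, hak⟩ := hmemD i (leftdesc_mem_left _ h)
              have := (hdrop_gt _ ha).1; omega
      · -- i in drop
        rcases hcases hj with hjT | hjR | hjD
        · have h1 := (hdrop_gt _ hiD).1
          have h2 := (htake_lt _ hjT).1
          omega
        · have : j = r.1 := by rw [← hjR]
          have := (hdrop_gt _ hiD).1; omega
        · -- both in drop: recurse right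
          have hIH := ih _ hlen2 hpwD h132D i vi j vj hiD hjD hij
          rw [hIH]
          constructor
          · exact fun h => Or.inr (Or.inr h)
          · rintro (⟨hrj, _⟩ | h | h)
            · exact absurd hrj (by have := (hdrop_gt _ hjD).1; omega)
            · exfalso
              obtain ⟨a, ha, hak⟩ := hmemT i (leftdesc_mem_left _ h)
              have h1 := (htake_lt _ ha).1
              have h2 := (hdrop_gt _ hiD).1
              omega
            · exact h

end StmtHelper

open StmtHelper in
theorem stmt_16 {n : ℕ} (p : Equiv.Perm (Fin n)) (hp : Avoids132 p)
    (i j : Fin n) (hij : i < j) :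
    (p i : ℕ) < (p j : ℕ) ↔ (permToPTree p).LeftDesc (i : ℕ) (j : ℕ) := by
  classical
  set l := List.ofFn (fun i : Fin n => ((i : ℕ), (p i : ℕ))) with hl
  have hlen : l.length ≤ n := by simp [hl]
  have hpw : l.Pairwise (fun a b => a.1 < b.1 ∧ a.2 ≠ b.2) := by
    rw [hl, List.pairwise_iff_getElem]
    intro a b ha hb hab
    simp only [List.getElem_ofFn]
    refine ⟨by simpa using hab, ?_⟩
    intro heq
    have h1 : p ⟨a, by simpa using ha⟩ = p ⟨b, by simpa using hb⟩ := Fin.val_injective heq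
    have h2 := p.injective h1
    have : a = b := by simpa [Fin.ext_iff] using h2
    omega
  have h132 : ∀ a ∈ l, ∀ b ∈ l, ∀ c ∈ l,
      a.1 < b.1 → b.1 < c.1 → a.2 < c.2 → c.2 < b.2 → False := by
    intro a ha b hb c hc h1 h2 h3 h4
    rw [hl, List.mem_ofFn] at ha hb hc
    obtain ⟨ka, rfl⟩ := ha
    obtain ⟨kb, rfl⟩ := hb
    obtain ⟨kc, rfl⟩ := hc
    have h1' : (ka : ℕ) < (kb : ℕ) := h1
    have h2' : (kb : ℕ) < (kc : ℕ) := h2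
    have h3' : (p ka : ℕ) < (p kc : ℕ) := h3
    have h4' : (p kc : ℕ) < (p kb : ℕ) := h4
    clear h1 h2 h3 h4
    apply hp
    refine ⟨![ka, kb, kc], ?_, ?_⟩
    · intro u v huv
      fin_cases u <;> fin_cases v <;>
        simp only [Fin.lt_def] at huv <;>
        first
          | exact absurd huv (by omega)
          | (simp; omega)
    · intro u v
      fin_cases u <;> fin_cases v <;> simp <;> omega
  have hi : ((i : ℕ), (p i : ℕ)) ∈ l := by
    rw [hl, List.mem_ofFn]; exact ⟨i, rfl⟩
  have hj : ((j : ℕ), (p j : ℕ)) ∈ l := by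
    rw [hl, List.mem_ofFn]; exact ⟨j, rfl⟩
  have := main_lemma n l hlen hpw h132 (i : ℕ) (p i : ℕ) (j : ℕ) (p j : ℕ) hi hj
    (by exact_mod_cast hij)
  rw [permToPTree, ← hl]
  exact this
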